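/- In the FedAvg setup, fix a round t, a client k, and a neuron h, and suppose the client-level activation set is a singleton: A^h_{t,k} = ∪_{i=0}^{n−1} A^h(θ_{t,k,i}, B_{t,k,i}) = {x} for some x ∈ ℝ^d. Then ΔW^h_{t,k} = Δb^h_{t,k} · x, where ΔW^h_{t,k} = W^h_{t,k,n} − W^h_{t−1} and Δb^h_{t,k} = b^h_{t,k,n} − b^h_{t−1}. Consequently, if Δb^h_{t,k} ≠ 0, the sample x can be recovered from the client's update of neuron h as x = ΔW^h_{t,k} / Δb^h_{t,k}. -/

import Mathlib

noncomputable section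

/-- Pre-activation `W^h · x + b^h` of neuron `h` on sample `x`. -/
def preact {d H : ℕ} (W : Fin H → Fin d → ℝ) (b : Fin H → ℝ) (x : Fin d → ℝ)
    (h : Fin H) : ℝ :=
  (∑ j, W h j * x j) + b h

/-- Componentwise ReLU output of the first layer. -/
def reluVec {d H : ℕ} (W : Fin H → Fin d → ℝ) (b : Fin H → ℝ) (x : Fin d → ℝ) :
    Fin H → ℝ :=
  fun h => max (preact W b x h) 0

/-- `F_{φ,y}(z) = ℓ(f(φ, z), y)`. -/
def Floss {H r C : ℕ} {Y : Type*} (f : (Fin r → ℝ) → (Fin H → ℝ) → Fin C → ℝ)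
    (l : (Fin C → ℝ) → Y → ℝ) (φ : Fin r → ℝ) (y : Y) (z : Fin H → ℝ) : ℝ :=
  l (f φ z) y

/-- Partial derivative of `F : ℝ^H → ℝ` in the `h`-th coordinate at `z`. -/
def dFh {H : ℕ} (F : (Fin H → ℝ) → ℝ) (z : Fin H → ℝ) (h : Fin H) : ℝ :=
  fderiv ℝ F z (Pi.single h 1)

/-- The loss of the model `θ = (W, b, φ)` on the batch `B`:
`L(θ; B) = ∑_{(x,y) ∈ B} ℓ(f(φ, ReLU(W x + b)), y)`. -/
def batchLoss {d H r C : ℕ} {Y : Type*} (f : (Fin r → ℝ) → (Fin H → ℝ) → Fin C → ℝ)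
    (l : (Fin C → ℝ) → Y → ℝ)
    (θ : (Fin H → Fin d → ℝ) × (Fin H → ℝ) × (Fin r → ℝ))
    (B : Finset ((Fin d → ℝ) × Y)) : ℝ :=
  ∑ p ∈ B, Floss f l θ.2.2 p.2 (reluVec θ.1 θ.2.1 p.1)

open Classical in
/-- Batch-level activation set `A^h(θ, B)` of neuron `h`, as a finset of
sample/label pairs of the batch. -/
def activB {d H r C : ℕ} {Y : Type*} (f : (Fin r → ℝ) → (Fin H → ℝ) → Fin C → ℝ)
    (l : (Fin C → ℝ) → Y → ℝ)
    (θ : (Fin H → Fin d → ℝ) × (Fin H → ℝ) × (Fin r → ℝ))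
    (B : Finset ((Fin d → ℝ) × Y)) (h : Fin H) : Finset ((Fin d → ℝ) × Y) :=
  B.filter (fun p => 0 < preact θ.1 θ.2.1 p.1 h ∧
    dFh (Floss f l θ.2.2 p.2) (reluVec θ.1 θ.2.1 p.1) h ≠ 0)

/-- The gradient of a function on the parameter space, assembled coordinatewise
from directional derivatives. -/
def gradP {d H r : ℕ} (L : ((Fin H → Fin d → ℝ) × (Fin H → ℝ) × (Fin r → ℝ)) → ℝ)
    (θ : (Fin H → Fin d → ℝ) × (Fin H → ℝ) × (Fin r → ℝ)) :
    (Fin H → Fin d → ℝ) × (Fin H → ℝ) × (Fin r → ℝ) :=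
  (fun h j => fderiv ℝ L θ (Pi.single h (Pi.single j 1), 0, 0),
   fun h => fderiv ℝ L θ (0, Pi.single h 1, 0),
   fun s => fderiv ℝ L θ (0, 0, Pi.single s 1))

/-- Round-level activation set `A^h_t` of neuron `h`: the set of samples activating
neuron `h` at some local update of some client during the round. -/
def roundActiv {d H r C K : ℕ} {Y : Type*} (f : (Fin r → ℝ) → (Fin H → ℝ) → Fin C → ℝ)
    (l : (Fin C → ℝ) → Y → ℝ) (n : ℕ)
    (θ : Fin K → ℕ → ((Fin H → Fin d → ℝ) × (Fin H → ℝ) × (Fin r → ℝ)))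
    (Bt : Fin K → ℕ → Finset ((Fin d → ℝ) × Y)) (h : Fin H) : Set (Fin d → ℝ) :=
  {x | ∃ k, ∃ i < n, ∃ y, (x, y) ∈ activB f l (θ k i) (Bt k i) h}


open scoped Classical

abbrev PSp (d H r : ℕ) := (Fin H → Fin d → ℝ) × (Fin H → ℝ) × (Fin r → ℝ)

def PhiL {d H r : ℕ} (x : Fin d → ℝ) (c : Fin H → Prop) :
    PSp d H r →ₗ[ℝ] (Fin r → ℝ) × (Fin H → ℝ) where
  toFun ψ := (ψ.2.2, fun h' => if c h' then (∑ j, ψ.1 h' j * x j) + ψ.2.1 h' else 0)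
  map_add' ψ χ := by
    refine Prod.ext rfl ?_
    funext h'
    by_cases hc : c h' <;> (simp [hc, Finset.sum_add_distrib, add_mul]; try ring)
  map_smul' a ψ := by
    refine Prod.ext rfl ?_
    funext h'
    by_cases hc : c h' <;> simp [hc, Finset.mul_sum, mul_add, mul_assoc]

def Phi {d H r : ℕ} (x : Fin d → ℝ) (c : Fin H → Prop) :
    PSp d H r →L[ℝ] (Fin r → ℝ) × (Fin H → ℝ) :=
  LinearMap.toContinuousLinearMap (PhiL x c)

lemma preact_cont {d H r : ℕ} (x : Fin d → ℝ) (h' : Fin H) :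
    Continuous (fun ψ : PSp d H r => preact ψ.1 ψ.2.1 x h') := by
  unfold preact
  fun_prop

lemma hasFDerivAt_sample {d H r C : ℕ} {Y : Type*}
    (f : (Fin r → ℝ) → (Fin H → ℝ) → Fin C → ℝ)
    (l : (Fin C → ℝ) → Y → ℝ)
    (hf : Differentiable ℝ (fun q : (Fin r → ℝ) × (Fin H → ℝ) => f q.1 q.2))
    (hl : ∀ y, Differentiable ℝ (fun u => l u y))
    (y : Y) (x : Fin d → ℝ) (θ : PSp d H r)
    (hx : ∀ h', preact θ.1 θ.2.1 x h' ≠ 0) :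
    HasFDerivAt (fun ψ : PSp d H r => Floss f l ψ.2.2 y (reluVec ψ.1 ψ.2.1 x))
      ((fderiv ℝ (fun q : (Fin r → ℝ) × (Fin H → ℝ) => l (f q.1 q.2) y)
          (θ.2.2, reluVec θ.1 θ.2.1 x)).comp
        (Phi x (fun h' => 0 < preact θ.1 θ.2.1 x h'))) θ := by
  set F := fun q : (Fin r → ℝ) × (Fin H → ℝ) => l (f q.1 q.2) y with hFdef
  have hFd : Differentiable ℝ F := (hl y).comp hf
  set c := fun h' => 0 < preact θ.1 θ.2.1 x h'
  have hPhiθ : Phi (r := r) x c θ = (θ.2.2, reluVec θ.1 θ.2.1 x) := by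
    refine Prod.ext rfl ?_
    funext h'
    show (if c h' then (∑ j, θ.1 h' j * x j) + θ.2.1 h' else 0) = max (preact θ.1 θ.2.1 x h') 0
    rcases lt_or_gt_of_ne (hx h') with hneg | hpos
    · simp only [c]
      rw [if_neg (by exact not_lt.2 hneg.le), max_eq_right hneg.le]
    · simp only [c]
      rw [if_pos hpos, max_eq_left hpos.le]
      rfl
  have hsm : HasFDerivAt (fun ψ => F (Phi (r := r) x c ψ))
      ((fderiv ℝ F (θ.2.2, reluVec θ.1 θ.2.1 x)).comp (Phi x c)) θ := by
    have h1 := (hFd (Phi (r := r) x c θ)).hasFDerivAt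
    have h2 := (Phi (r := r) x c).hasFDerivAt (x := θ)
    have := h1.comp θ h2
    rwa [hPhiθ] at this
  refine hsm.congr_of_eventuallyEq ?_
  have hev : ∀ h' : Fin H, ∀ᶠ ψ : PSp d H r in nhds θ,
      max (preact ψ.1 ψ.2.1 x h') 0 = (Phi (r := r) x c ψ).2 h' := by
    intro h'
    have hcont := (preact_cont (r := r) x h').continuousAt (x := θ)
    rcases lt_or_gt_of_ne (hx h') with hneg | hpos
    · filter_upwards [hcont.eventually (eventually_lt_nhds hneg)] with ψ hψ
      show max _ 0 = if c h' then _ else 0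
      rw [max_eq_right hψ.le, if_neg (by exact not_lt.2 (le_of_lt hneg))]
    · filter_upwards [hcont.eventually (eventually_gt_nhds hpos)] with ψ hψ
      show max _ 0 = if c h' then _ else 0
      rw [max_eq_left hψ.le, if_pos hpos]
      rfl
  filter_upwards [Filter.eventually_all.2 hev] with ψ hψ
  show l (f ψ.2.2 _) y = F (Phi (r := r) x c ψ)
  have : reluVec ψ.1 ψ.2.1 x = (Phi (r := r) x c ψ).2 := funext hψ
  rw [show reluVec ψ.1 ψ.2.1 x = (Phi (r := r) x c ψ).2 from this]
  rfl

lemma phi_wdir {d H r : ℕ} (x : Fin d → ℝ) (c : Fin H → Prop) (h : Fin H) (j : Fin d) :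
    Phi (r := r) x c (Pi.single h (Pi.single j 1), 0, 0)
      = (0, Pi.single h (if c h then x j else 0)) := by
  refine Prod.ext rfl ?_
  funext h'
  show (if c h' then (∑ j', (Pi.single h (Pi.single j 1) : Fin H → Fin d → ℝ) h' j' * x j') + (0:Fin H → ℝ) h' else 0) = _
  by_cases hh : h' = h
  · subst hh
    simp [Pi.single_apply, Finset.sum_ite_eq']
  · simp [Pi.single_apply, hh, Ne.symm hh]

lemma phi_bdir {d H r : ℕ} (x : Fin d → ℝ) (c : Fin H → Prop) (h : Fin H) :
    Phi (r := r) x c ((0 : Fin H → Fin d → ℝ), Pi.single h 1, 0)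
      = (0, Pi.single h (if c h then 1 else 0)) := by
  refine Prod.ext rfl ?_
  funext h'
  show (if c h' then (∑ j', (0 : Fin H → Fin d → ℝ) h' j' * x j') + (Pi.single h 1 : Fin H → ℝ) h' else 0) = _
  by_cases hh : h' = h
  · subst hh
    simp [Pi.single_apply]
  · simp [Pi.single_apply, hh, Ne.symm hh]

lemma fderiv_pair_single {H r C : ℕ} {Y : Type*}
    (f : (Fin r → ℝ) → (Fin H → ℝ) → Fin C → ℝ)
    (l : (Fin C → ℝ) → Y → ℝ)
    (hf : Differentiable ℝ (fun q : (Fin r → ℝ) × (Fin H → ℝ) => f q.1 q.2))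
    (hl : ∀ y, Differentiable ℝ (fun u => l u y))
    (y : Y) (φ : Fin r → ℝ) (z : Fin H → ℝ) (h : Fin H) (a : ℝ) :
    fderiv ℝ (fun q : (Fin r → ℝ) × (Fin H → ℝ) => l (f q.1 q.2) y) (φ, z)
        ((0 : Fin r → ℝ), Pi.single h a)
      = a * dFh (Floss f l φ y) z h := by
  set F := fun q : (Fin r → ℝ) × (Fin H → ℝ) => l (f q.1 q.2) y with hFdef
  have hFd : Differentiable ℝ F := (hl y).comp hf
  have hinr : HasFDerivAt (fun z' : Fin H → ℝ => (φ, z'))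
      (ContinuousLinearMap.inr ℝ (Fin r → ℝ) (Fin H → ℝ)) z := hasFDerivAt_prodMk_right φ z
  have hcomp : HasFDerivAt (fun z' => F (φ, z'))
      ((fderiv ℝ F (φ, z)).comp (ContinuousLinearMap.inr ℝ _ _)) z :=
    (hFd (φ, z)).hasFDerivAt.comp z hinr
  have h1 : dFh (Floss f l φ y) z h
      = fderiv ℝ F (φ, z) ((0 : Fin r → ℝ), Pi.single h 1) := by
    show fderiv ℝ (fun z' => F (φ, z')) z (Pi.single h 1) = _
    rw [hcomp.fderiv]
    rfl
  have h2 : ((0 : Fin r → ℝ), (Pi.single h a : Fin H → ℝ))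
      = a • ((0 : Fin r → ℝ), (Pi.single h 1 : Fin H → ℝ)) := by
    refine Prod.ext (by simp) ?_
    simp [← Pi.single_smul, smul_eq_mul]
  rw [h1, h2, ContinuousLinearMap.map_smul, smul_eq_mul]

lemma gradP_batch {d H r C : ℕ} {Y : Type*}
    (f : (Fin r → ℝ) → (Fin H → ℝ) → Fin C → ℝ)
    (l : (Fin C → ℝ) → Y → ℝ)
    (hf : Differentiable ℝ (fun q : (Fin r → ℝ) × (Fin H → ℝ) => f q.1 q.2))
    (hl : ∀ y, Differentiable ℝ (fun u => l u y))
    (B : Finset ((Fin d → ℝ) × Y)) (θ : PSp d H r)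
    (hnd : ∀ h' : Fin H, ∀ p ∈ B, preact θ.1 θ.2.1 p.1 h' ≠ 0) (h : Fin H) :
    (∀ j, (gradP (fun ψ => batchLoss f l ψ B) θ).1 h j
        = ∑ p ∈ B, (if 0 < preact θ.1 θ.2.1 p.1 h then
            dFh (Floss f l θ.2.2 p.2) (reluVec θ.1 θ.2.1 p.1) h * p.1 j else 0))
    ∧ (gradP (fun ψ => batchLoss f l ψ B) θ).2.1 h
        = ∑ p ∈ B, (if 0 < preact θ.1 θ.2.1 p.1 h then
            dFh (Floss f l θ.2.2 p.2) (reluVec θ.1 θ.2.1 p.1) h else 0) := by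
  have hsum : HasFDerivAt (fun ψ : PSp d H r => batchLoss f l ψ B)
      (∑ p ∈ B, (fderiv ℝ (fun q : (Fin r → ℝ) × (Fin H → ℝ) => l (f q.1 q.2) p.2)
          (θ.2.2, reluVec θ.1 θ.2.1 p.1)).comp
        (Phi p.1 (fun h' => 0 < preact θ.1 θ.2.1 p.1 h'))) θ :=
    HasFDerivAt.fun_sum (fun p hp => hasFDerivAt_sample f l hf hl p.2 p.1 θ (fun h' => hnd h' p hp))
  have hfd := hsum.fderiv
  constructor
  · intro j
    show fderiv ℝ (fun ψ : PSp d H r => batchLoss f l ψ B) θ (Pi.single h (Pi.single j 1), 0, 0) = _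
    rw [hfd, ContinuousLinearMap.sum_apply]
    refine Finset.sum_congr rfl ?_
    intro p _
    rw [ContinuousLinearMap.comp_apply, phi_wdir,
      fderiv_pair_single f l hf hl p.2 θ.2.2 (reluVec θ.1 θ.2.1 p.1) h]
    by_cases hc : 0 < preact θ.1 θ.2.1 p.1 h
    · rw [if_pos hc, if_pos hc]
      ring
    · rw [if_neg hc, if_neg hc, zero_mul]
  · show fderiv ℝ (fun ψ : PSp d H r => batchLoss f l ψ B) θ
        ((0 : Fin H → Fin d → ℝ), Pi.single h 1, 0) = _
    rw [hfd, ContinuousLinearMap.sum_apply]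
    refine Finset.sum_congr rfl ?_
    intro p _
    rw [ContinuousLinearMap.comp_apply, phi_bdir,
      fderiv_pair_single f l hf hl p.2 θ.2.2 (reluVec θ.1 θ.2.1 p.1) h]
    by_cases hc : 0 < preact θ.1 θ.2.1 p.1 h
    · rw [if_pos hc, if_pos hc]
      ring
    · rw [if_neg hc, if_neg hc, zero_mul]

theorem stmt12 {d H r C : ℕ} {Y : Type*}
    (f : (Fin r → ℝ) → (Fin H → ℝ) → Fin C → ℝ)
    (l : (Fin C → ℝ) → Y → ℝ)
    (hf : Differentiable ℝ (fun q : (Fin r → ℝ) × (Fin H → ℝ) => f q.1 q.2))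
    (hl : ∀ y, Differentiable ℝ (fun u => l u y))
    (n : ℕ) (η : ℝ) (hη : 0 < η)
    (θprev : (Fin H → Fin d → ℝ) × (Fin H → ℝ) × (Fin r → ℝ))
    (Bt : ℕ → Finset ((Fin d → ℝ) × Y))
    (θ : ℕ → ((Fin H → Fin d → ℝ) × (Fin H → ℝ) × (Fin r → ℝ)))
    (hinj : ∀ i < n, ∀ p ∈ Bt i, ∀ q ∈ Bt i, p.1 = q.1 → p = q)
    (hinit : θ 0 = θprev)
    (hstep : ∀ i < n,
      θ (i + 1) = θ i - η • gradP (fun ψ => batchLoss f l ψ (Bt i)) (θ i))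
    (hnd : ∀ i < n, ∀ h' : Fin H, ∀ p ∈ Bt i, preact (θ i).1 (θ i).2.1 p.1 h' ≠ 0)
    (h : Fin H) (x : Fin d → ℝ)
    (hsingle : {x0 : Fin d → ℝ | ∃ i < n, ∃ y, (x0, y) ∈ activB f l (θ i) (Bt i) h} = {x}) :
    (θ n).1 h - θprev.1 h = ((θ n).2.1 h - θprev.2.1 h) • x ∧
    ((θ n).2.1 h - θprev.2.1 h ≠ 0 →
      x = ((θ n).2.1 h - θprev.2.1 h)⁻¹ • ((θ n).1 h - θprev.1 h)) := by
  have key : ∀ i ≤ n, (θ i).1 h - θprev.1 h = ((θ i).2.1 h - θprev.2.1 h) • x := by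
    intro i hi
    induction i with
    | zero =>
      rw [hinit]
      simp
    | succ i ih =>
      have hilt : i < n := hi
      have ihh := ih (le_of_lt hilt)
      obtain ⟨hW, hb⟩ := gradP_batch f l hf hl (Bt i) (θ i)
        (fun h' p hp => hnd i hilt h' p hp) h
      have hrow : (gradP (fun ψ => batchLoss f l ψ (Bt i)) (θ i)).1 h
          = ((gradP (fun ψ => batchLoss f l ψ (Bt i)) (θ i)).2.1 h) • x := by
        funext j
        rw [Pi.smul_apply, smul_eq_mul, hW j, hb, Finset.sum_mul]
        refine Finset.sum_congr rfl ?_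
        intro p hp
        by_cases hpos : 0 < preact (θ i).1 (θ i).2.1 p.1 h
        · rw [if_pos hpos, if_pos hpos]
          by_cases hz : dFh (Floss f l (θ i).2.2 p.2) (reluVec (θ i).1 (θ i).2.1 p.1) h = 0
          · rw [hz, zero_mul, zero_mul]
          · have hpx : p.1 = x := by
              have hmem : p.1 ∈ ({x0 : Fin d → ℝ | ∃ i < n, ∃ y, (x0, y) ∈ activB f l (θ i) (Bt i) h}) := by
                refine ⟨i, hilt, p.2, ?_⟩
                simp only [activB, Finset.mem_filter]
                exact ⟨by simpa using hp, hpos, hz⟩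
              rw [hsingle] at hmem
              simpa using hmem
            rw [hpx]
        · rw [if_neg hpos, if_neg hpos, zero_mul]
      rw [hstep i hilt]
      simp only [Prod.fst_sub, Prod.smul_fst, Prod.snd_sub, Prod.smul_snd,
        Pi.sub_apply, Pi.smul_apply, smul_eq_mul]
      rw [hrow]
      have hrewrite : (θ i).1 h = ((θ i).2.1 h - θprev.2.1 h) • x + θprev.1 h := by
        rw [← ihh]
        abel
      rw [hrewrite]
      module
  have h1 := key n le_rfl
  refine ⟨h1, fun hΔ => ?_⟩
  rw [h1, inv_smul_smul₀ hΔ]
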